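/- On SO(n), the coordinate functions x_{ij} satisfy κ(x_{ij}, x_{kl}) = -(1/2)(x_{il}x_{kj} - δ_{jl} Σ_{t=1}^n x_{it}x_{kt}), where κ(x_{ij}, x_{kl})(x) = Σ_{r<s} (e_i·x·Y_{rs}·e_jᵀ)(e_k·x·Y_{rs}·e_lᵀ). -/

import Mathlib

open Matrix

theorem stmt10 (n : ℕ) (x : Matrix (Fin n) (Fin n) ℝ)
    (hx : x * xᵀ = 1) (hdet : x.det = 1)
    (Y : Fin n → Fin n → Matrix (Fin n) (Fin n) ℝ)
    (hY : ∀ r s, Y r s =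
      (Real.sqrt 2)⁻¹ • (Matrix.single r s (1 : ℝ) - Matrix.single s r 1))
    (i j k l : Fin n) :
    (∑ r : Fin n, ∑ s : Fin n, if r < s then (x * Y r s) i j * (x * Y r s) k l else 0) =
      -(1/2 : ℝ) * (x i l * x k j -
        (if j = l then (1 : ℝ) else 0) * ∑ t : Fin n, x i t * x k t) := by
  have hc : ((Real.sqrt 2)⁻¹ : ℝ) * (Real.sqrt 2)⁻¹ = 1/2 := by
    rw [← mul_inv]
    rw [Real.mul_self_sqrt (by norm_num)]; norm_num
  have key : ∀ (a b r s : Fin n), (x * Y r s) a b =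
      (Real.sqrt 2)⁻¹ * ((if s = b then x a r else 0) - (if r = b then x a s else 0)) := by
    intro a b r s
    rw [hY]
    simp [Matrix.mul_apply, Matrix.single, mul_sub, Finset.sum_sub_distrib,
      ite_and, mul_ite, Finset.sum_ite_eq, Finset.sum_ite_eq']
    ring
  -- f r s
  set f : Fin n → Fin n → ℝ := fun r s => (x * Y r s) i j * (x * Y r s) k l with hf
  have hsymm : ∀ r s, f r s = f s r := by
    intro r s
    simp only [hf, key]
    ring
  have hdiag : ∀ r, f r r = 0 := by
    intro r
    simp only [hf, key]
    ring_nf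
  have htri : ∀ r s : Fin n, f r s =
      (if r < s then f r s else 0) + (if s < r then f r s else 0) +
        (if r = s then f r s else 0) := by
    intro r s
    rcases lt_trichotomy r s with h | h | h
    · simp [h, h.ne, h.asymm]
    · simp [h]
    · simp [h, h.ne', h.asymm]
  have hswap : (∑ r : Fin n, ∑ s : Fin n, if s < r then f r s else 0)
      = ∑ r : Fin n, ∑ s : Fin n, if r < s then f r s else 0 := by
    rw [Finset.sum_comm]
    congr 1; ext r; congr 1; ext s
    rw [hsymm]
  have h2 : (∑ r : Fin n, ∑ s : Fin n, f r s)
      = 2 * ∑ r : Fin n, ∑ s : Fin n, (if r < s then f r s else 0) := by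
    calc (∑ r : Fin n, ∑ s : Fin n, f r s)
        = ∑ r : Fin n, ∑ s : Fin n, ((if r < s then f r s else 0) +
            (if s < r then f r s else 0) + (if r = s then f r s else 0)) := by
          simp_rw [← htri]
      _ = (∑ r : Fin n, ∑ s : Fin n, if r < s then f r s else 0) +
          (∑ r : Fin n, ∑ s : Fin n, if s < r then f r s else 0) +
          (∑ r : Fin n, ∑ s : Fin n, if r = s then f r s else 0) := by
          simp [Finset.sum_add_distrib]
      _ = 2 * ∑ r : Fin n, ∑ s : Fin n, (if r < s then f r s else 0) := by
          rw [hswap]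
          have : (∑ r : Fin n, ∑ s : Fin n, if r = s then f r s else 0) = 0 := by
            simp [Finset.sum_ite_eq, hdiag]
          rw [this]; ring
  have hfull : (∑ r : Fin n, ∑ s : Fin n, f r s)
      = (x i l * x k j - (if j = l then (1:ℝ) else 0) * ∑ t : Fin n, x i t * x k t) * (-1) := by
    simp only [hf, key]
    have hterm : ∀ (r s : Fin n),
        (Real.sqrt 2)⁻¹ * ((if s = j then x i r else 0) - if r = j then x i s else 0) *
          ((Real.sqrt 2)⁻¹ * ((if s = l then x k r else 0) - if r = l then x k s else 0)) =
        (1/2) * (((if s = j then x i r else 0) - if r = j then x i s else 0) *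
          ((if s = l then x k r else 0) - if r = l then x k s else 0)) := by
      intro r s; rw [← hc]; ring
    simp_rw [hterm]
    rcases eq_or_ne j l with h | h
    · subst h
      simp [sub_mul, mul_sub, ite_mul, mul_ite, Finset.sum_sub_distrib,
        Finset.sum_ite_eq, Finset.sum_ite_eq', Finset.mul_sum, Finset.sum_add_distrib]
      simp only [← Finset.mul_sum]
      ring
    · simp [sub_mul, mul_sub, ite_mul, mul_ite, Finset.sum_sub_distrib,
        Finset.sum_ite_eq, Finset.sum_ite_eq', Finset.mul_sum, h, h.symm]
      ring
  have := h2.symm.trans hfull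
  linarith [this]
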